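/- Let G be a simple graph in which no shortest odd hole is jewelled, let H be a great pyramid in G with apex a, base {b1,b2,b3} and constituent paths P1,P2,P3, and let v be a vertex major for H having at most one neighbour in {b1,b2,b3}. Then there exists k ∈ {1,2,3} such that v has no neighbour in V(Pk)\{a}. -/

import Mathlib

open SimpleGraph

namespace SOH

variable {V : Type*}

/-- A walk is "induced" if every edge of `G` between vertices of the walk is an edge
of the walk. -/
def IsInducedWalk (G : SimpleGraph V) {u v : V} (P : G.Walk u v) : Prop :=
  ∀ x y : V, x ∈ P.support → y ∈ P.support → G.Adj x y → P.toSubgraph.Adj x y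

/-- The interior of a path: its vertices other than the two ends. -/
def interior (G : SimpleGraph V) {u v : V} (P : G.Walk u v) : Set V :=
  {x | x ∈ P.support} \ {u, v}

/-- A hole: an induced cycle of length at least 4. -/
def IsHole (G : SimpleGraph V) {u : V} (c : G.Walk u u) : Prop :=
  c.IsCycle ∧ 4 ≤ c.length ∧ IsInducedWalk G c

/-- An odd hole: a hole of odd length. -/
def IsOddHole (G : SimpleGraph V) {u : V} (c : G.Walk u u) : Prop :=
  IsHole G c ∧ Odd c.length

/-- A shortest odd hole: an odd hole of minimum length among all odd holes of `G`. -/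
def IsShortestOddHole (G : SimpleGraph V) {u : V} (c : G.Walk u u) : Prop :=
  IsOddHole G c ∧ ∀ (w : V) (d : G.Walk w w), IsOddHole G d → c.length ≤ d.length

/-- A vertex `v` is `C`-major if there is no three-vertex path of `C` containing all
neighbours of `v` in `V(C)`. -/
def CMajor (G : SimpleGraph V) {u : V} (c : G.Walk u u) (v : V) : Prop :=
  ¬ ∃ x y z : V, c.toSubgraph.Adj x y ∧ c.toSubgraph.Adj y z ∧ x ≠ z ∧
      ∀ w ∈ c.support, G.Adj v w → (w = x ∨ w = y ∨ w = z)

/-- A big `C`-major vertex: a `C`-major vertex with at least four neighbours in `V(C)`. -/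
def BigCMajor (G : SimpleGraph V) {u : V} (c : G.Walk u u) (v : V) : Prop :=
  CMajor G c v ∧ 4 ≤ {w | w ∈ c.support ∧ G.Adj v w}.ncard

/-- A hole `c` is jewelled. -/
def Jewelled (G : SimpleGraph V) {u : V} (c : G.Walk u u) : Prop :=
  (∃ c1 c2 c4 c5 c3 : V, ([c1, c2, c4, c5] : List V).Nodup ∧
      c.toSubgraph.Adj c1 c2 ∧ c.toSubgraph.Adj c2 c4 ∧ c.toSubgraph.Adj c4 c5 ∧
      G.Adj c3 c1 ∧ G.Adj c3 c5) ∨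
  (∃ c1 c3 c5 c2 c4 : V, ([c1, c3, c5] : List V).Nodup ∧
      c.toSubgraph.Adj c1 c3 ∧ c.toSubgraph.Adj c3 c5 ∧
      c2 ∉ c.support ∧ c4 ∉ c.support ∧ c2 ≠ c4 ∧
      G.Adj c1 c2 ∧ G.Adj c2 c4 ∧ G.Adj c4 c5 ∧
      ¬ G.Adj c1 c4 ∧ ¬ G.Adj c2 c5 ∧ ¬ G.Adj c1 c5)

/-- A pyramid in `G`, with apex `apex`, base `{b1, b2, b3}` and constituent paths
`P1, P2, P3`. -/
structure Pyramid (G : SimpleGraph V) where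
  apex : V
  b1 : V
  b2 : V
  b3 : V
  P1 : G.Walk apex b1
  P2 : G.Walk apex b2
  P3 : G.Walk apex b3
  distinct : ([apex, b1, b2, b3] : List V).Nodup
  isPath1 : P1.IsPath
  isPath2 : P2.IsPath
  isPath3 : P3.IsPath
  induced1 : IsInducedWalk G P1
  induced2 : IsInducedWalk G P2
  induced3 : IsInducedWalk G P3
  adj12 : G.Adj b1 b2
  adj13 : G.Adj b1 b3
  adj23 : G.Adj b2 b3
  twoLong : (2 ≤ P1.length ∧ 2 ≤ P2.length) ∨ (2 ≤ P1.length ∧ 2 ≤ P3.length) ∨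
      (2 ≤ P2.length ∧ 2 ≤ P3.length)
  disj12 : {x | x ∈ P1.support} ∩ {x | x ∈ P2.support} = {apex}
  disj13 : {x | x ∈ P1.support} ∩ {x | x ∈ P3.support} = {apex}
  disj23 : {x | x ∈ P2.support} ∩ {x | x ∈ P3.support} = {apex}
  edges12 : ∀ x y : V, x ∈ P1.support → y ∈ P2.support → x ≠ apex → y ≠ apex →
      G.Adj x y → x = b1 ∧ y = b2
  edges13 : ∀ x y : V, x ∈ P1.support → y ∈ P3.support → x ≠ apex → y ≠ apex →
      G.Adj x y → x = b1 ∧ y = b3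
  edges23 : ∀ x y : V, x ∈ P2.support → y ∈ P3.support → x ≠ apex → y ≠ apex →
      G.Adj x y → x = b2 ∧ y = b3

/-- The vertex set of a pyramid. -/
def Pyramid.verts {G : SimpleGraph V} (H : Pyramid G) : Set V :=
  {x | x ∈ H.P1.support} ∪ {x | x ∈ H.P2.support} ∪ {x | x ∈ H.P3.support}

/-- The closed walk `apex-P1-b1-b2-P2-apex` associated with a pyramid. -/
def Pyramid.hole {G : SimpleGraph V} (H : Pyramid G) : G.Walk H.apex H.apex :=
  H.P1.append (Walk.cons H.adj12 H.P2.reverse)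

/-- A great pyramid: the hole `apex-P1-b1-b2-P2-apex` is a shortest odd hole and `P3` is
strictly shorter than `P1` and `P2`. -/
structure GreatPyramid (G : SimpleGraph V) extends Pyramid G where
  holeShortest : IsShortestOddHole G toPyramid.hole
  short31 : toPyramid.P3.length < toPyramid.P1.length
  short32 : toPyramid.P3.length < toPyramid.P2.length

/-- The heart of a great pyramid: `V(P3) \ {apex}`. -/
def GreatPyramid.heart {G : SimpleGraph V} (H : GreatPyramid G) : Set V :=
  {x | x ∈ H.P3.support} \ {H.apex}

/-- An optimal great pyramid: one of minimum height (= length of `P3`). -/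
def GreatPyramid.Optimal {G : SimpleGraph V} (H : GreatPyramid G) : Prop :=
  ∀ H' : GreatPyramid G, H.P3.length ≤ H'.P3.length

/-- `L1, L2` are the two subpaths of the cycle `c` joining `u` and `v`. -/
def IsSplit (G : SimpleGraph V) {w u v : V} (c : G.Walk w w) (L1 L2 : G.Walk u v) : Prop :=
  L1.IsPath ∧ L2.IsPath ∧
  {x | x ∈ L1.support} ∩ {x | x ∈ L2.support} = {u, v} ∧
  {x | x ∈ L1.support} ∪ {x | x ∈ L2.support} = {x | x ∈ c.support} ∧
  (∀ e ∈ L1.edges, e ∈ c.edges) ∧ (∀ e ∈ L2.edges, e ∈ c.edges) ∧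
  L1.length + L2.length = c.length

/-- A shortcut for a (shortest odd) hole `c`: a path joining two distinct nonadjacent
vertices of `c`, shorter than both arcs of `c` between them, containing no big
`c`-major vertex. -/
def IsShortcut (G : SimpleGraph V) {w u v : V} (c : G.Walk w w) (P : G.Walk u v) : Prop :=
  u ∈ c.support ∧ v ∈ c.support ∧ u ≠ v ∧ ¬ G.Adj u v ∧ P.IsPath ∧
  (∀ L1 L2 : G.Walk u v, IsSplit G c L1 L2 → P.length < min L1.length L2.length) ∧
  ∀ x ∈ P.support, ¬ BigCMajor G c x


section walklemmas

variable {G : SimpleGraph V}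









/-- support as getVert map. -/
lemma support_eq_map_getVert {u v : V} (p : G.Walk u v) :
    p.support = (List.range (p.length + 1)).map p.getVert := by
  induction p with
  | nil => simp [Walk.getVert]
  | cons h q ih =>
    rw [Walk.support_cons, Walk.length_cons, List.range_succ_eq_map]
    simp only [List.map_cons, List.map_map]
    rw [ih]
    rfl

lemma getVert_mem_support {u v : V} (p : G.Walk u v) (i : ℕ) : p.getVert i ∈ p.support := by
  rw [Walk.mem_support_iff_exists_getVert]
  by_cases h : i ≤ p.length
  · exact ⟨i, rfl, h⟩
  · exact ⟨p.length, by rw [Walk.getVert_length, Walk.getVert_of_length_le _ (le_of_not_ge h)],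
      le_rfl⟩

lemma support_getElem? {u v : V} (p : G.Walk u v) (i : ℕ) (hi : i ≤ p.length) :
    p.support[i]? = some (p.getVert i) := by
  rw [support_eq_map_getVert, List.getElem?_map, List.getElem?_range (by omega)]
  rfl

/-- getVert injectivity on paths. -/
lemma getVert_inj_of_nodup {u v : V} {p : G.Walk u v} (h : p.support.Nodup)
    {i j : ℕ} (hi : i ≤ p.length) (hj : j ≤ p.length) (hij : p.getVert i = p.getVert j) :
    i = j := by
  have h1 := support_getElem? p i hi
  have h2 := support_getElem? p j hj
  rw [hij] at h1
  have := (List.getElem?_inj (by rw [support_eq_map_getVert]; simp; omega) h).mp (h1.trans h2.symm)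
  exact this


section cyc

/-- getVert injectivity on cycles (positions in `[0, length]`, with wrap identification). -/
lemma cycle_getVert_inj {u : V} {p : G.Walk u u} (h : p.IsCycle)
    {i j : ℕ} (hi : i ≤ p.length) (hj : j ≤ p.length) (hij : p.getVert i = p.getVert j) :
    i = j ∨ (i = 0 ∧ j = p.length) ∨ (j = 0 ∧ i = p.length) := by
  have htail : ∀ k, 1 ≤ k → k ≤ p.length → p.support.tail[k-1]? = some (p.getVert k) := by
    intro k h1 h2
    have hs := support_getElem? p k h2
    rw [p.support_eq_cons] at hs
    rw [← hs]
    rcases Nat.exists_eq_add_of_le h1 with ⟨t, rfl⟩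
    simp [Nat.add_sub_cancel_left, Nat.add_comm 1 t]
  have hlen : p.support.tail.length = p.length := by
    have h1 := p.length_support
    have h2 : p.support.length = p.support.tail.length + 1 := by
      conv_lhs => rw [p.support_eq_cons]
      simp
    omega
  rcases Nat.eq_zero_or_pos i with rfl | hi1
  · rcases Nat.eq_zero_or_pos j with rfl | hj1
    · left; rfl
    · by_cases hjl : j = p.length
      · right; left; exact ⟨rfl, hjl⟩
      · exfalso
        have e1 := htail p.length (by have := h.three_le_length; omega) le_rfl
        rw [Walk.getVert_length] at e1
        have e2 := htail j hj1 hj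
        rw [← hij, Walk.getVert_zero] at e2
        have := (List.getElem?_inj (i := j - 1) (by omega) h.support_nodup).mp (e2.trans e1.symm)
        omega
  · rcases Nat.eq_zero_or_pos j with rfl | hj1
    · by_cases hil : i = p.length
      · right; right; exact ⟨rfl, hil⟩
      · exfalso
        have e1 := htail p.length (by have := h.three_le_length; omega) le_rfl
        rw [Walk.getVert_length] at e1
        have e2 := htail i hi1 hi
        rw [hij, Walk.getVert_zero] at e2
        have := (List.getElem?_inj (i := i - 1) (by omega) h.support_nodup).mp (e2.trans e1.symm)
        omega
    · left
      have e1 := htail i hi1 hi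
      have e2 := htail j hj1 hj
      rw [hij] at e1
      have := (List.getElem?_inj (i := i - 1) (by omega) h.support_nodup).mp (e1.trans e2.symm)
      omega

end cyc





lemma exists_drop {u v : V} (p : G.Walk u v) (i : ℕ) (hi : i ≤ p.length) :
    ∃ r : G.Walk (p.getVert i) v, r.length = p.length - i ∧
      (∀ k, r.getVert k = p.getVert (i + k)) ∧ (∀ e ∈ r.edges, e ∈ p.edges) := by
  clear hi
  induction p generalizing i with
  | nil => exact ⟨Walk.nil, by simp, fun k => rfl, by simp⟩
  | @cons a b c hadj q ih =>
    cases i with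
    | zero =>
      refine ⟨(Walk.cons hadj q).copy (Walk.getVert_zero _).symm rfl, by simp, fun k => by simp,
        fun e he => by simpa using he⟩
    | succ n =>
      obtain ⟨r, hlen, hc, he⟩ := ih n
      refine ⟨r.copy (Walk.getVert_cons_succ q hadj).symm rfl, by
        rw [Walk.length_copy, Walk.length_cons]; omega, fun k => ?_, fun e he' => ?_⟩
      · rw [Walk.getVert_copy, hc k, show n + 1 + k = (n + k) + 1 from by omega, Walk.getVert_cons_succ]
      · rw [Walk.edges_cons]
        exact List.mem_cons_of_mem _ (he _ (by simpa using he'))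

lemma exists_take {u v : V} (p : G.Walk u v) (j : ℕ) (hj : j ≤ p.length) :
    ∃ q : G.Walk u (p.getVert j), q.length = j ∧
      (∀ k, k ≤ j → q.getVert k = p.getVert k) ∧ (∀ e ∈ q.edges, e ∈ p.edges) := by
  induction p generalizing j with
  | nil =>
    have : j = 0 := by simpa using hj
    subst this
    exact ⟨Walk.nil, rfl, fun k _ => rfl, by simp⟩
  | @cons a b c hadj p ih =>
    cases j with
    | zero =>
      exact ⟨Walk.nil.copy rfl (Walk.getVert_zero _).symm, by simp, fun k hk => by
        have : k = 0 := Nat.le_zero.mp hk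
        subst this; simp, by simp⟩
    | succ n =>
      obtain ⟨q, hlen, hc, he⟩ := ih n (by simpa [Nat.succ_le_succ_iff] using hj)
      refine ⟨(Walk.cons hadj q).copy rfl (Walk.getVert_cons_succ p hadj).symm, by simp [hlen],
        ?_, ?_⟩
      · intro k hk
        rw [Walk.getVert_copy]
        cases k with
        | zero => simp [Walk.getVert]
        | succ m =>
          simpa [Walk.getVert] using hc m (by omega)
      · intro e he'
        rw [Walk.edges_copy] at he'
        rw [Walk.edges_cons] at he' ⊢
        rcases List.mem_cons.mp he' with h | h
        · simp [h]
        · exact List.mem_cons_of_mem _ (he _ h)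

lemma exists_arc {u v : V} (p : G.Walk u v) {i j : ℕ} (hij : i ≤ j) (hj : j ≤ p.length) :
    ∃ q : G.Walk (p.getVert i) (p.getVert j), q.length = j - i ∧
      (∀ k, k ≤ j - i → q.getVert k = p.getVert (i + k)) ∧ (∀ e ∈ q.edges, e ∈ p.edges) := by
  obtain ⟨r, hrlen, hrc, hre⟩ := exists_drop p i (le_trans hij hj)
  obtain ⟨q, hqlen, hqc, hqe⟩ := exists_take r (j - i) (by omega)
  have hend : r.getVert (j - i) = p.getVert j := by rw [hrc]; congr 1; omega
  refine ⟨q.copy rfl hend, by simpa using hqlen, ?_, ?_⟩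
  · intro k hk
    rw [Walk.getVert_copy, hqc k hk, hrc]
  · intro e he
    simp only [Walk.edges_copy] at he
    exact hre _ (hqe _ he)





lemma edges_countP_eq {u v : V} (p : G.Walk u v) (pr : Sym2 V → Bool) :
    p.edges.countP pr =
      (List.range p.length).countP (fun i => pr s(p.getVert i, p.getVert (i + 1))) := by
  induction p with
  | nil => rfl
  | @cons a b c hadj q ih =>
    rw [Walk.edges_cons, List.countP_cons, ih, Walk.length_cons, List.range_succ_eq_map,
      List.countP_cons, List.countP_map]
    have h1 : (if pr s(a, b) = true then 1 else 0) =
        if pr s((Walk.cons hadj q).getVert 0, (Walk.cons hadj q).getVert (0 + 1)) = true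
          then 1 else 0 := by simp
    have h2 : List.countP (fun i => pr s(q.getVert i, q.getVert (i + 1)))
        (List.range q.length) = List.countP
        ((fun i => pr s((Walk.cons hadj q).getVert i, (Walk.cons hadj q).getVert (i + 1))) ∘
          Nat.succ) (List.range q.length) := by
      refine List.countP_congr fun i _ => ?_
      simp only [Function.comp, Nat.succ_eq_add_one, Walk.getVert_cons_succ]
    omega

lemma toSubgraph_adj_of_mem_edges {u v a b : V} (p : G.Walk u v) (h : s(a, b) ∈ p.edges) :
    p.toSubgraph.Adj a b := by
  induction p with
  | nil => simp at h
  | @cons x y z hadj q ih =>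
    rw [Walk.edges_cons, List.mem_cons] at h
    simp only [Walk.toSubgraph, Subgraph.sup_adj]
    rcases h with h | h
    · left
      rcases Sym2.eq_iff.mp h with ⟨rfl, rfl⟩ | ⟨rfl, rfl⟩
      · simp
      · simp [Sym2.eq_swap]
    · exact Or.inr (ih h)

/-- core arithmetic parity lemma -/
lemma core_parity :
    ∀ (m : ℕ) (B : ℕ → Prop) [DecidablePred B], 1 ≤ m → B 0 → B m →
    (∀ i j : ℕ, i < j → j ≤ m → B i → B j → (∀ k, i < k → k < j → ¬ B k) →
      (j - i) % 2 = 1 → j - i = 1) →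
    ((List.range m).countP (fun i => decide (B i ∧ B (i + 1)))) % 2 = m % 2 := by
  intro m
  induction m using Nat.strong_induction_on with
  | _ m IH =>
    intro B _ hm hB0 hBm HG
    have hex : ∃ j, 0 < j ∧ j ≤ m ∧ B j := ⟨m, by omega, le_rfl, hBm⟩
    classical
    obtain ⟨j, hj0, hjm, hBj, hleast⟩ :
        ∃ j, 0 < j ∧ j ≤ m ∧ B j ∧ ∀ k, 0 < k → k < j → ¬ B k := by
      refine ⟨Nat.find hex, (Nat.find_spec hex).1, (Nat.find_spec hex).2.1,
        (Nat.find_spec hex).2.2, ?_⟩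
      intro k hk1 hk2 hBk
      exact Nat.find_min hex hk2 ⟨hk1, le_trans hk2.le (Nat.find_spec hex).2.1, hBk⟩
    have hj1 : j % 2 = 1 → j = 1 := by
      intro hodd
      have := HG 0 j hj0 hjm hB0 hBj (fun k h1 h2 => hleast k h1 h2) (by simpa using hodd)
      omega
    have hsplit : List.range m = List.range j ++ (List.range (m - j)).map (j + ·) := by
      conv_lhs => rw [show m = j + (m - j) by omega]
      exact List.range_add
    rw [hsplit, List.countP_append, List.countP_map]
    have hc1 : (List.range j).countP (fun i => decide (B i ∧ B (i + 1))) =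
        if j = 1 then 1 else 0 := by
      by_cases hj : j = 1
      · subst hj
        simp only [if_true]
        have : B 0 ∧ B (0 + 1) := ⟨hB0, hBj⟩
        simp [List.range_succ, this]
      · rw [if_neg hj]
        apply List.countP_eq_zero.mpr
        intro i hi
        rw [List.mem_range] at hi
        simp only [decide_eq_true_eq, not_and]
        intro hBi
        rcases Nat.eq_zero_or_pos i with rfl | hipos
        · exact fun hB1 => hleast 1 one_pos (by omega) hB1
        · exact absurd hBi (hleast i hipos hi)
    rw [hc1]
    have hc2 : ((List.range (m - j)).countP ((fun i => decide (B i ∧ B (i + 1))) ∘ (j + ·)))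
        = (List.range (m - j)).countP (fun k => decide (B (j + k) ∧ B (j + (k + 1)))) := by
      refine List.countP_congr fun k _ => ?_
      simp [Function.comp, Nat.add_assoc]
    rw [hc2]
    by_cases hjm' : j = m
    · subst hjm'
      simp only [Nat.sub_self, List.range_zero, List.countP_nil]
      by_cases hj : j = 1
      · simp [hj]
      · have : j % 2 = 0 := by
          rcases Nat.mod_two_eq_zero_or_one j with h | h
          · exact h
          · exact absurd (hj1 h) hj
        rw [if_neg hj]
        omega
    · have hIH := IH (m - j) (by omega) (fun k => B (j + k)) (by omega)
        (show B (j + 0) from by simpa using hBj)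
        (show B (j + (m - j)) from by rw [show j + (m - j) = m by omega]; exact hBm)
        (by
          intro i' j' h1 h2 hBi' hBj' hnone hodd
          have := HG (j + i') (j + j') (by omega) (by omega) hBi' hBj'
            (fun k hk1 hk2 => by
              have hk : j + (k - j) = k := by omega
              rw [← hk]
              exact hnone (k - j) (by omega) (by omega))
            (by rw [show j + j' - (j + i') = j' - i' by omega]; exact hodd)
          omega)
      have hIH' : (List.range (m - j)).countP
          (fun k => decide (B (j + k) ∧ B (j + (k + 1)))) % 2 = (m - j) % 2 := hIH
      by_cases hj : j = 1
      · subst hj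
        simp only [if_true]
        omega
      · have hje : j % 2 = 0 := by
          rcases Nat.mod_two_eq_zero_or_one j with h | h
          · exact h
          · exact absurd (hj1 h) hj
        rw [if_neg hj]
        omega


end walklemmas

section gap

variable {G : SimpleGraph V}

open scoped Classical in
/-- number of edges of a walk both of whose endpoints are neighbours of `v`. -/
noncomputable def nbrCount (G : SimpleGraph V) (v : V) {a b : V} (p : G.Walk a b) : ℕ :=
  p.edges.countP (fun e => decide (∀ x ∈ e, G.Adj v x))

lemma ncard_le_three (S : Set V) (a b c : V) (h : S ⊆ {a, b, c}) : S.ncard ≤ 3 := by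
  calc S.ncard ≤ ({a, b, c} : Set V).ncard :=
        Set.ncard_le_ncard h (Set.toFinite _)
    _ ≤ 3 := by
        apply le_trans (Set.ncard_insert_le _ _)
        have := Set.ncard_insert_le b ({c} : Set V)
        simp [Set.ncard_singleton] at this ⊢
        omega

lemma ncard_le_one (S : Set V) (a : V) (h : S ⊆ {a}) : S.ncard ≤ 1 := by
  calc S.ncard ≤ ({a} : Set V).ncard := Set.ncard_le_ncard h (Set.toFinite _)
    _ = 1 := Set.ncard_singleton a

/-- end vertex of a closed nonnil walk lies in the tail of the support. -/
lemma end_mem_support_tail {u : V} (p : G.Walk u u) (hp : p ≠ Walk.nil) :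
    u ∈ p.support.tail := by
  cases p with
  | nil => exact absurd rfl hp
  | cons h q => simpa using q.end_mem_support

/-- position-consecutiveness helper on a cycle. -/
lemma pos_adj_aux {u : V} {E : G.Walk u u} (hc : E.IsCycle)
    {i j s1 s2 t : ℕ} (hij : i < j) (hjm : j ≤ E.length) (hwrap : ¬(i = 0 ∧ j = E.length))
    (hs1 : i ≤ s1) (hs1' : s1 ≤ j) (hs2 : i ≤ s2) (hs2' : s2 ≤ j) (ht : t < E.length)
    (h1 : E.getVert t = E.getVert s1) (h2 : E.getVert (t + 1) = E.getVert s2) :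
    s2 = s1 + 1 ∨ (s1 = j ∧ s2 = i) := by
  have hm3 := hc.three_le_length
  have k1 := cycle_getVert_inj hc (by omega) (by omega) h1
  rcases k1 with rfl | ⟨ht0, hs1m⟩ | ⟨hs10, htm⟩
  · -- t = s1
    have k2 := cycle_getVert_inj hc (by omega) (by omega) h2
    rcases k2 with h | ⟨h, h'⟩ | ⟨h, h'⟩
    · exact Or.inl h.symm
    · omega
    · -- s2 = 0 ∧ s1 + 1 = length
      right
      omega
  · -- t = 0, s1 = length; so j = length, i ≥ 1
    subst ht0
    have hjlen : j = E.length := by omega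
    have hi1 : 1 ≤ i := by
      rcases Nat.eq_zero_or_pos i with h0 | h1
      · exact absurd ⟨h0, hjlen⟩ hwrap
      · exact h1
    have k2 := cycle_getVert_inj hc (show (0:ℕ) + 1 ≤ E.length by omega) (by omega) h2
    rcases k2 with h | ⟨h, h'⟩ | ⟨h, h'⟩
    · right
      omega
    · omega
    · omega
  · omega

end gap

section gapmain

variable {G : SimpleGraph V}

open scoped Classical in
lemma prv_pair (G : SimpleGraph V) (v x y : V) :
    (fun e => decide (∀ z ∈ e, G.Adj v z)) s(x, y) = decide (G.Adj v x ∧ G.Adj v y) := by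
  simp only [decide_eq_decide]
  constructor
  · intro h
    exact ⟨h x (by simp), h y (by simp)⟩
  · rintro ⟨h1, h2⟩ z hz
    rcases Sym2.mem_iff.mp hz with rfl | rfl
    · exact h1
    · exact h2

lemma gap_parity_base (G : SimpleGraph V) (v : V) {u : V} (E : G.Walk u u)
    (hc : E.IsCycle) (hind : IsInducedWalk G E) (hv : v ∉ E.support)
    (hu : G.Adj v u)
    (hmin : ∀ (w : V) (d : G.Walk w w), IsOddHole G d → E.length ≤ d.length)
    (hnd : ∀ x y : V, x ∈ E.support → y ∈ E.support → G.Adj v x → G.Adj v y → G.Adj x y →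
      ∃ z ∈ E.support, G.Adj v z ∧ z ≠ x ∧ z ≠ y)
    (hsc : Even E.length ∨ 4 ≤ {w | w ∈ E.support ∧ G.Adj v w}.ncard) :
    nbrCount G v E % 2 = E.length % 2 := by
  classical
  have hm3 : 3 ≤ E.length := hc.three_le_length
  have hB0 : G.Adj v (E.getVert 0) := by simpa using hu
  have hBm : G.Adj v (E.getVert E.length) := by rw [Walk.getVert_length]; exact hu
  have hgm : E.getVert E.length = E.getVert 0 := by simp [Walk.getVert_length]
  -- positions of neighbours
  have hpos : ∀ w, w ∈ E.support → G.Adj v w →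
      ∃ k, k ≤ E.length ∧ E.getVert k = w ∧ G.Adj v (E.getVert k) := by
    intro w hws hwadj
    obtain ⟨k, hk1, hk2⟩ := Walk.mem_support_iff_exists_getVert.mp hws
    exact ⟨k, hk2, hk1, by rw [hk1]; exact hwadj⟩
  -- rewrite the count
  have hcount : nbrCount G v E = (List.range E.length).countP
      (fun i => decide (G.Adj v (E.getVert i) ∧ G.Adj v (E.getVert (i + 1)))) := by
    rw [nbrCount, edges_countP_eq]
    refine List.countP_congr fun k hk => ?_
    simp only [decide_eq_true_eq]
    constructor
    · intro h
      exact ⟨h _ (by simp), h _ (by simp)⟩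
    · rintro ⟨h1, h2⟩ z hz
      rcases Sym2.mem_iff.mp hz with rfl | rfl
      · exact h1
      · exact h2
  rw [hcount]
  -- the main gap condition
  refine core_parity E.length (fun i => G.Adj v (E.getVert i)) (by omega) hB0 hBm ?_
  intro i j hij hjm hBi hBj hnone' hodd
  have hnone : ∀ k, i < k → k < j → ¬ G.Adj v (E.getVert k) := hnone'
  by_contra hne
  have hd3 : 3 ≤ j - i := by omega
  have hvx : G.Adj v (E.getVert i) := hBi
  have hvy : G.Adj v (E.getVert j) := hBj
  have hxs : E.getVert i ∈ E.support := getVert_mem_support E i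
  have hys : E.getVert j ∈ E.support := getVert_mem_support E j
  -- Case 1 : x and y adjacent
  by_cases hxy : G.Adj (E.getVert i) (E.getVert j)
  · have hts := hind _ _ hxs hys hxy
    obtain ⟨t, ht_eq, ht_lt⟩ := (Walk.toSubgraph_adj_iff E).mp hts
    -- find the third neighbour in the degenerate situations
    have third : (i = 0 ∧ j = E.length - 1) ∨ (i = 1 ∧ j = E.length) → False := by
      rintro hcase
      obtain ⟨z, hzs, hzadj, hzx, hzy⟩ := hnd _ _ hxs hys hvx hvy hxy
      obtain ⟨k', hk'm, hk'eq, hBk'⟩ := hpos z hzs hzadj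
      have hnb : ¬(i < k' ∧ k' < j) := fun h => hnone k' h.1 h.2 (by rw [hk'eq]; exact hzadj)
      rcases hcase with ⟨hi0, hjm1⟩ | ⟨hi1, hjm'⟩
      · have hk3 : k' = 0 ∨ k' = E.length - 1 ∨ k' = E.length := by omega
        rcases hk3 with rfl | rfl | rfl
        · exact hzx (by rw [← hk'eq, hi0])
        · exact hzy (by rw [← hk'eq, hjm1])
        · exact hzx (by rw [← hk'eq, hgm, hi0])
      · have hk3 : k' = 0 ∨ k' = 1 ∨ k' = E.length := by omega
        rcases hk3 with rfl | rfl | rfl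
        · exact hzy (by rw [← hk'eq, ← hgm, hjm'])
        · exact hzx (by rw [← hk'eq, hi1])
        · exact hzy (by rw [← hk'eq, hjm'])
    rcases Sym2.eq_iff.mp ht_eq with ⟨h1, h2⟩ | ⟨h1, h2⟩
    · -- getVert t = x, getVert (t+1) = y
      rcases cycle_getVert_inj hc (by omega) (by omega) h1 with rfl | ⟨ht0, him⟩ | ⟨hi0, htm⟩
      · rcases cycle_getVert_inj hc (by omega) (by omega) h2 with h | ⟨h, h'⟩ | ⟨h, h'⟩
        · omega
        · omega
        · omega
      · omega
      · omega
    · -- getVert t = y, getVert (t+1) = x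
      rcases cycle_getVert_inj hc (by omega) (by omega) h1 with rfl | ⟨ht0, hjm'⟩ | ⟨hj0, htm⟩
      · -- t = j
        rcases cycle_getVert_inj hc (by omega) (by omega) h2 with h | ⟨h, h'⟩ | ⟨h, h'⟩
        · omega
        · omega
        · -- i = 0, j + 1 = m
          exact third (Or.inl ⟨h, by omega⟩)
      · -- t = 0, j = m
        subst ht0
        rcases cycle_getVert_inj hc (show (0:ℕ)+1 ≤ E.length by omega) (by omega) h2
          with h | ⟨h, h'⟩ | ⟨h, h'⟩
        · exact third (Or.inr ⟨by omega, hjm'⟩)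
        · omega
        · omega
      · omega
  · -- Case 2 : x and y not adjacent
    -- exclude the full-circle arc
    have hdm : ¬(i = 0 ∧ j = E.length) := by
      rintro ⟨rfl, rfl⟩
      have hsub : {w | w ∈ E.support ∧ G.Adj v w} ⊆ {E.getVert 0} := by
        rintro w ⟨hws, hwa⟩
        obtain ⟨k', hk'm, hk'eq, hBk'⟩ := hpos w hws hwa
        have hnb : ¬(0 < k' ∧ k' < E.length) := fun h => hnone k' h.1 h.2 hBk'
        have hk2 : k' = 0 ∨ k' = E.length := by omega
        rcases hk2 with rfl | rfl
        · simp [← hk'eq]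
        · simp [← hk'eq, hgm]
      rcases hsc with he | hn
      · rw [Nat.even_iff] at he
        omega
      · have := ncard_le_one _ _ hsub
        omega
    -- the arc of the cycle from position i to position j
    obtain ⟨q, hqlen, hqc, hqe⟩ := exists_arc E (le_of_lt hij) hjm
    have hqsupmem : ∀ w, w ∈ q.support ↔ ∃ k, k ≤ j - i ∧ E.getVert (i + k) = w := by
      intro w
      rw [Walk.mem_support_iff_exists_getVert]
      constructor
      · rintro ⟨k, hk1, hk2⟩
        exact ⟨k, by omega, by rw [← hqc k (by omega)]; exact hk1⟩
      · rintro ⟨k, hk1, hk2⟩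
        exact ⟨k, by rw [hqc k hk1]; exact hk2, by omega⟩
    have hqsub : ∀ w, w ∈ q.support → w ∈ E.support := by
      intro w hw
      obtain ⟨k, hk, rfl⟩ := (hqsupmem w).mp hw
      exact getVert_mem_support E _
    have hvq : v ∉ q.support := fun h => hv (hqsub v h)
    have harcinj : ∀ k k', k ≤ j - i → k' ≤ j - i →
        E.getVert (i + k) = E.getVert (i + k') → k = k' := by
      intro k k' hk hk' heq
      rcases cycle_getVert_inj hc (by omega) (by omega) heq with h | ⟨h, h'⟩ | ⟨h, h'⟩
      · omega
      · exact absurd ⟨by omega, by omega⟩ hdm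
      · exact absurd ⟨by omega, by omega⟩ hdm
    have hqnodup : q.support.Nodup := by
      rw [support_eq_map_getVert q, hqlen]
      refine List.Nodup.map_on ?_ List.nodup_range
      intro k hk k' hk' heq
      rw [List.mem_range] at hk hk'
      rw [hqc k (by omega), hqc k' (by omega)] at heq
      exact harcinj k k' (by omega) (by omega) heq
    have hxyne : E.getVert i ≠ E.getVert j := by
      intro h
      rcases cycle_getVert_inj hc (by omega) (by omega) h with h' | ⟨h', h''⟩ | ⟨h', h''⟩
      · omega
      · exact hdm ⟨h', h''⟩
      · omega
    have hyv : G.Adj (E.getVert j) v := hvy.symm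
    -- build the cycle through v
    set K : G.Walk v v := Walk.cons hvx (q.append (Walk.cons hyv Walk.nil)) with hK
    have hKlen : K.length = (j - i) + 2 := by
      rw [hK, Walk.length_cons, Walk.length_append, Walk.length_cons, Walk.length_nil, hqlen]
    have hKsup : K.support = v :: (q.support ++ [v]) := by
      rw [hK, Walk.support_cons, Walk.support_append]
      simp
    have hKmem : ∀ w, w ∈ K.support ↔ w = v ∨ w ∈ q.support := by
      intro w
      rw [hKsup]
      simp only [List.mem_cons, List.mem_append, List.mem_singleton]
      tauto
    have hKedges : K.edges = s(v, E.getVert i) :: (q.edges ++ [s(E.getVert j, v)]) := by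
      rw [hK, Walk.edges_cons, Walk.edges_append, Walk.edges_cons]
      simp
    have hqtrail : q.edges.Nodup := Walk.edges_nodup_of_support_nodup hqnodup
    have hKcyc : K.IsCycle := by
      rw [Walk.isCycle_def]
      refine ⟨⟨?_⟩, by simp [hK], ?_⟩
      · rw [hKedges]
        rw [List.nodup_cons, List.nodup_append]
        refine ⟨?_, hqtrail, List.nodup_singleton _, ?_⟩
        · rw [List.mem_append, List.mem_singleton]
          rintro (h | h)
          · exact hvq (Walk.fst_mem_support_of_mem_edges q h)
          · rcases Sym2.eq_iff.mp h with ⟨h1, h2⟩ | ⟨h1, h2⟩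
            · exact hvy.ne h1
            · exact hxyne h2
        · intro e he b hb hbe
          rw [← hbe] at hb
          revert hb
          rw [List.mem_singleton]
          intro heq
          rw [heq] at he
          exact hvq (Walk.snd_mem_support_of_mem_edges q he)
      · rw [hKsup]
        simp only [List.tail_cons]
        rw [List.nodup_append]
        exact ⟨hqnodup, List.nodup_singleton _, by
          intro w hw b hb hbe
          rw [← hbe] at hb
          revert hb
          rw [List.mem_singleton]
          intro heq
          rw [heq] at hw
          exact hvq hw⟩
    -- the new cycle is induced
    have hqle : q.toSubgraph ≤ K.toSubgraph := by
      rw [hK]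
      simp only [Walk.toSubgraph, Walk.toSubgraph_append]
      exact le_sup_of_le_right le_sup_left
    have hconsec : ∀ kk, kk + 1 ≤ j - i →
        K.toSubgraph.Adj (E.getVert (i + kk)) (E.getVert (i + kk + 1)) := by
      intro kk hkk
      have hadj := q.toSubgraph_adj_getVert (i := kk) (by omega)
      rw [hqc kk (by omega), hqc (kk + 1) (by omega), show i + (kk + 1) = i + kk + 1 by omega]
        at hadj
      exact hqle.2 hadj
    have hvcase : ∀ w, w ∈ q.support → G.Adj v w → K.toSubgraph.Adj v w := by
      intro w hw hvw
      obtain ⟨k, hk, rfl⟩ := (hqsupmem w).mp hw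
      have hnb : ¬(i < i + k ∧ i + k < j) := fun h => hnone _ h.1 h.2 hvw
      have hk0d : k = 0 ∨ k = j - i := by omega
      rcases hk0d with rfl | rfl
      · apply toSubgraph_adj_of_mem_edges K
        rw [hKedges, show i + 0 = i by omega]
        exact List.mem_cons_self
      · refine (toSubgraph_adj_of_mem_edges K ?_).symm
        rw [hKedges, show i + (j - i) = j by omega]
        simp
    have hKind : IsInducedWalk G K := by
      intro a b ha hb hab
      rw [hKmem] at ha hb
      rcases ha with rfl | ha
      · rcases hb with rfl | hb
        · exact absurd rfl hab.ne
        · exact hvcase b hb hab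
      · rcases hb with rfl | hb
        · exact (hvcase a ha hab.symm).symm
        · obtain ⟨k, hk, rfl⟩ := (hqsupmem a).mp ha
          obtain ⟨k', hk', rfl⟩ := (hqsupmem b).mp hb
          have hEadj := hind _ _ (getVert_mem_support E _) (getVert_mem_support E _) hab
          obtain ⟨t, ht_eq, ht_lt⟩ := (Walk.toSubgraph_adj_iff E).mp hEadj
          rcases Sym2.eq_iff.mp ht_eq with ⟨h1, h2⟩ | ⟨h1, h2⟩
          · rcases pos_adj_aux hc hij hjm hdm (by omega) (by omega) (by omega) (by omega)
              ht_lt h1 h2 with hcons | ⟨hs1, hs2⟩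
            · rw [show i + k' = i + k + 1 by omega]
              exact hconsec k (by omega)
            · exfalso
              apply hxy
              rw [← congrArg E.getVert hs1, ← congrArg E.getVert hs2]
              exact hab.symm
          · rcases pos_adj_aux hc hij hjm hdm (by omega) (by omega) (by omega) (by omega)
              ht_lt h1 h2 with hcons | ⟨hs1, hs2⟩
            · rw [show i + k = i + k' + 1 by omega]
              exact (hconsec k' (by omega)).symm
            · exfalso
              apply hxy
              rw [← congrArg E.getVert hs2, ← congrArg E.getVert hs1]
              exact hab
    -- K is an odd hole, contradicting minimality / scarcity
    have hKodd : IsOddHole G K := by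
      refine ⟨⟨hKcyc, by omega, hKind⟩, ?_⟩
      rw [hKlen]
      exact Nat.odd_iff.mpr (by omega)
    have hmK := hmin v K hKodd
    rw [hKlen] at hmK
    -- final arithmetic contradiction
    have hSsub3 : ∀ a1 a2 a3 : ℕ,
        (∀ k', k' ≤ E.length → ¬(i < k' ∧ k' < j) →
          (E.getVert k' = E.getVert a1 ∨ E.getVert k' = E.getVert a2 ∨
            E.getVert k' = E.getVert a3)) →
        {w | w ∈ E.support ∧ G.Adj v w}.ncard ≤ 3 := by
      intro a1 a2 a3 hall
      apply ncard_le_three _ (E.getVert a1) (E.getVert a2) (E.getVert a3)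
      rintro w ⟨hws, hwa⟩
      obtain ⟨k', hk'm, rfl, hBk'⟩ := hpos w hws hwa
      have hnb : ¬(i < k' ∧ k' < j) := fun h => hnone k' h.1 h.2 hBk'
      rcases hall k' hk'm hnb with h | h | h <;> simp [h]
    have hncard3 : 4 ≤ {w | w ∈ E.support ∧ G.Adj v w}.ncard → False := by
      intro hn4
      have hcases : (i = 0 ∧ j = E.length - 1) ∨ (i = 1 ∧ j = E.length) ∨
          (i = 0 ∧ j = E.length - 2) ∨ (i = 1 ∧ j = E.length - 1) ∨
          (i = 2 ∧ j = E.length) := by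
        rcases Nat.eq_zero_or_pos i with h0 | h1 <;> omega
      rcases hcases with ⟨hi', hj'⟩ | ⟨hi', hj'⟩ | ⟨hi', hj'⟩ | ⟨hi', hj'⟩ | ⟨hi', hj'⟩
      ·
        apply hxy
        have := E.adj_getVert_succ (i := E.length - 1) (by omega)
        rw [show E.length - 1 + 1 = E.length by omega, hgm] at this
        rw [hi', hj']
        exact this.symm
      · apply hxy
        have := E.adj_getVert_succ (i := 0) (by omega)
        rw [← hgm] at this
        rw [hi', hj']
        exact this.symm
      · refine absurd hn4 (Nat.not_le.mpr ?_)
        refine Nat.lt_of_le_of_lt (hSsub3 0 (E.length - 2) (E.length - 1) ?_) (by omega)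
        intro k' hk' hnb
        have : k' = 0 ∨ k' = E.length - 2 ∨ k' = E.length - 1 ∨ k' = E.length := by omega
        rcases this with rfl | rfl | rfl | rfl
        · exact Or.inl rfl
        · exact Or.inr (Or.inl rfl)
        · exact Or.inr (Or.inr rfl)
        · exact Or.inl hgm
      · refine absurd hn4 (Nat.not_le.mpr ?_)
        refine Nat.lt_of_le_of_lt (hSsub3 0 1 (E.length - 1) ?_) (by omega)
        intro k' hk' hnb
        have : k' = 0 ∨ k' = 1 ∨ k' = E.length - 1 ∨ k' = E.length := by omega
        rcases this with rfl | rfl | rfl | rfl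
        · exact Or.inl rfl
        · exact Or.inr (Or.inl rfl)
        · exact Or.inr (Or.inr rfl)
        · exact Or.inl hgm
      · refine absurd hn4 (Nat.not_le.mpr ?_)
        refine Nat.lt_of_le_of_lt (hSsub3 0 1 2 ?_) (by omega)
        intro k' hk' hnb
        have : k' = 0 ∨ k' = 1 ∨ k' = 2 ∨ k' = E.length := by omega
        rcases this with rfl | rfl | rfl | rfl
        · exact Or.inl rfl
        · exact Or.inr (Or.inl rfl)
        · exact Or.inr (Or.inr rfl)
        · exact Or.inl hgm
    rcases hsc with he | hn
    · rw [Nat.even_iff] at he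
      have hdm2 : j - i = E.length - 1 := by omega
      -- then i = 0, j = m-1 or i = 1, j = m; both give adjacency of x and y
      have hcases : (i = 0 ∧ j = E.length - 1) ∨ (i = 1 ∧ j = E.length) := by omega
      rcases hcases with ⟨hi', hj'⟩ | ⟨hi', hj'⟩
      · apply hxy
        have := E.adj_getVert_succ (i := E.length - 1) (by omega)
        rw [show E.length - 1 + 1 = E.length by omega, hgm] at this
        rw [hi', hj']
        exact this.symm
      · apply hxy
        have := E.adj_getVert_succ (i := 0) (by omega)
        rw [← hgm] at this
        rw [hi', hj']
        exact this.symm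
    · exact hncard3 hn

end gapmain

section gapwrap

variable {G : SimpleGraph V}

lemma mem_support_iff_mem_tail {u : V} (p : G.Walk u u) (hp : p ≠ Walk.nil) (w : V) :
    w ∈ p.support ↔ w ∈ p.support.tail := by
  constructor
  · intro h
    rw [p.support_eq_cons, List.mem_cons] at h
    rcases h with rfl | h
    · exact end_mem_support_tail p hp
    · exact h
  · intro h
    rw [p.support_eq_cons]
    exact List.mem_cons_of_mem _ h

lemma gap_parity (G : SimpleGraph V) (v : V) {u : V} (D : G.Walk u u)
    (hc : D.IsCycle) (hind : IsInducedWalk G D) (hv : v ∉ D.support)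
    (hmin : ∀ (w : V) (d : G.Walk w w), IsOddHole G d → D.length ≤ d.length)
    (hnd : ∀ x y : V, x ∈ D.support → y ∈ D.support → G.Adj v x → G.Adj v y → G.Adj x y →
      ∃ z ∈ D.support, G.Adj v z ∧ z ≠ x ∧ z ≠ y)
    (hsc : Even D.length ∨ 4 ≤ {w | w ∈ D.support ∧ G.Adj v w}.ncard) :
    nbrCount G v D % 2 = D.length % 2 := by
  classical
  by_cases hS : ∃ x ∈ D.support, G.Adj v x
  · obtain ⟨x0, hx0s, hx0⟩ := hS
    have hDnil : D ≠ Walk.nil := hc.ne_nil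
    set E := D.rotate _ hx0s with hE
    have hcE : E.IsCycle := hc.rotate hx0s
    have hperm : List.Perm E.edges D.edges := (D.rotate_edges _ hx0s).perm
    have hlenE : E.length = D.length := by
      rw [← Walk.length_edges, ← Walk.length_edges]
      exact hperm.length_eq
    have hsupE : ∀ w, w ∈ E.support ↔ w ∈ D.support := by
      intro w
      rw [mem_support_iff_mem_tail E hcE.ne_nil, mem_support_iff_mem_tail D hDnil]
      exact (D.support_rotate _ hx0s).perm.mem_iff
    have htsE : E.toSubgraph = D.toSubgraph := D.toSubgraph_rotate hx0s
    have hindE : IsInducedWalk G E := by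
      intro x y hx hy hadj
      rw [htsE]
      exact hind x y ((hsupE x).mp hx) ((hsupE y).mp hy) hadj
    have hvE : v ∉ E.support := fun h => hv ((hsupE v).mp h)
    have hcountE : nbrCount G v E = nbrCount G v D := by
      rw [nbrCount, nbrCount]
      exact hperm.countP_eq _
    have hsetE : {w | w ∈ E.support ∧ G.Adj v w} = {w | w ∈ D.support ∧ G.Adj v w} := by
      ext w
      simp [hsupE w]
    have := gap_parity_base G v E hcE hindE hvE hx0
      (by rw [hlenE]; exact hmin)
      (by
        intro x y hx hy h1 h2 h3
        obtain ⟨z, hz, h4, h5, h6⟩ := hnd x y ((hsupE x).mp hx) ((hsupE y).mp hy) h1 h2 h3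
        exact ⟨z, (hsupE z).mpr hz, h4, h5, h6⟩)
      (by rw [hlenE, hsetE]; exact hsc)
    rw [hcountE, hlenE] at this
    exact this
  · push_neg at hS
    have hcount0 : nbrCount G v D = 0 := by
      rw [nbrCount, List.countP_eq_zero]
      intro e he
      induction e with
      | h x y =>
        simp only [decide_eq_true_eq]
        intro hall
        exact hS x (Walk.fst_mem_support_of_mem_edges D he) (hall x (by simp))
    have hSempty : {w | w ∈ D.support ∧ G.Adj v w} = ∅ := by
      ext w
      simp only [Set.mem_setOf_eq, Set.mem_empty_iff_false, iff_false, not_and]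
      exact hS w
    rcases hsc with he | hn
    · rw [hcount0, Nat.even_iff] at *
      omega
    · rw [hSempty] at hn
      simp at hn
  
end gapwrap

section pyramid

variable {G : SimpleGraph V}

lemma pyramid_distincts (P : Pyramid G) :
    P.apex ≠ P.b1 ∧ P.apex ≠ P.b2 ∧ P.apex ≠ P.b3 ∧ P.b1 ≠ P.b2 ∧ P.b1 ≠ P.b3 ∧
      P.b2 ≠ P.b3 := by
  have := P.distinct
  simp only [List.nodup_cons, List.mem_cons, List.mem_singleton, List.nodup_nil,
    List.not_mem_nil, or_false, not_or] at this
  tauto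

lemma pyramid_len1 (P : Pyramid G) : 1 ≤ P.P1.length := by
  rcases Nat.eq_zero_or_pos P.P1.length with h | h
  · exact absurd (Walk.eq_of_length_eq_zero h) (pyramid_distincts P).1
  · exact h

lemma pyramid_len2 (P : Pyramid G) : 1 ≤ P.P2.length := by
  rcases Nat.eq_zero_or_pos P.P2.length with h | h
  · exact absurd (Walk.eq_of_length_eq_zero h) (pyramid_distincts P).2.1
  · exact h

lemma hole_length (P : Pyramid G) : P.hole.length = P.P1.length + P.P2.length + 1 := by
  rw [Pyramid.hole, Walk.length_append, Walk.length_cons, Walk.length_reverse]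
  omega

lemma hole_support_iff (P : Pyramid G) (w : V) :
    w ∈ P.hole.support ↔ w ∈ P.P1.support ∨ w ∈ P.P2.support := by
  rw [Pyramid.hole, Walk.mem_support_append_iff, Walk.support_cons]
  simp only [List.mem_cons]
  constructor
  · rintro (h | rfl | h)
    · exact Or.inl h
    · exact Or.inl P.P1.end_mem_support
    · exact Or.inr (by rwa [Walk.support_reverse, List.mem_reverse] at h)
  · rintro (h | h)
    · exact Or.inl h
    · exact Or.inr (Or.inr (by rwa [Walk.support_reverse, List.mem_reverse]))

lemma mem_inter_apex (P : Pyramid G) {w : V} (h1 : w ∈ P.P1.support)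
    (h2 : w ∈ P.P2.support) : w = P.apex := by
  have : w ∈ ({P.apex} : Set V) := by
    rw [← P.disj12]
    exact ⟨h1, h2⟩
  simpa using this

lemma hole_edges (P : Pyramid G) :
    P.hole.edges = P.P1.edges ++ (s(P.b1, P.b2) :: P.P2.edges.reverse) := by
  rw [Pyramid.hole, Walk.edges_append, Walk.edges_cons, Walk.edges_reverse]

lemma hole_isCycle (P : Pyramid G) : P.hole.IsCycle := by
  have hd := pyramid_distincts P
  rw [Walk.isCycle_def]
  refine ⟨⟨?_⟩, ?_, ?_⟩
  · -- edges nodup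
    rw [hole_edges, List.nodup_append]
    refine ⟨Walk.edges_nodup_of_support_nodup P.isPath1.support_nodup, ?_, ?_⟩
    · rw [List.nodup_cons]
      constructor
      · intro h
        rw [List.mem_reverse] at h
        have hb1 : P.b1 ∈ P.P2.support := Walk.fst_mem_support_of_mem_edges _ h
        exact hd.1 (mem_inter_apex P P.P1.end_mem_support hb1).symm
      · rw [List.nodup_reverse]
        exact Walk.edges_nodup_of_support_nodup P.isPath2.support_nodup
    · intro e he b hb hbe
      rw [← hbe] at hb
      revert hb
      rw [List.mem_cons, List.mem_reverse]
      rintro (rfl | h)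
      · have hb2 : P.b2 ∈ P.P1.support := Walk.snd_mem_support_of_mem_edges _ he
        exact hd.2.1 (mem_inter_apex P hb2 P.P2.end_mem_support).symm
      · induction e with
        | h x y =>
          have hx := mem_inter_apex P (Walk.fst_mem_support_of_mem_edges _ he)
            (Walk.fst_mem_support_of_mem_edges _ h)
          have hy := mem_inter_apex P (Walk.snd_mem_support_of_mem_edges _ he)
            (Walk.snd_mem_support_of_mem_edges _ h)
          have hadj := Walk.adj_of_mem_edges _ he
          rw [hx, hy] at hadj
          exact hadj.ne rfl
  · -- not nil
    intro h
    have : P.hole.length = 0 := by rw [h]; rfl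
    have := hole_length P
    have := pyramid_len1 P
    omega
  · -- support tail nodup
    have hsup : P.hole.support = P.P1.support ++ P.P2.reverse.support := by
      rw [Pyramid.hole, Walk.support_append, Walk.support_cons, List.tail_cons]
    rw [hsup, List.tail_append_of_ne_nil (Walk.support_ne_nil _), List.nodup_append]
    refine ⟨P.isPath1.support_nodup.tail, ?_, ?_⟩
    · rw [Walk.support_reverse, List.nodup_reverse]
      exact P.isPath2.support_nodup
    · intro w hw b hw2 hbe
      rw [← hbe] at hw2
      have hwP1 : w ∈ P.P1.support := by
        rw [P.P1.support_eq_cons]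
        exact List.mem_cons_of_mem _ hw
      have hwP2 : w ∈ P.P2.support := by
        rwa [Walk.support_reverse, List.mem_reverse] at hw2
      have hwapex := mem_inter_apex P hwP1 hwP2
      subst hwapex
      have := P.isPath1.support_nodup
      rw [P.P1.support_eq_cons, List.nodup_cons] at this
      exact this.1 hw

lemma hole_induced (P : Pyramid G) : IsInducedWalk G P.hole := by
  have hts : ∀ x y : V, P.P1.toSubgraph.Adj x y ∨ (x = P.b1 ∧ y = P.b2) ∨
      P.P2.toSubgraph.Adj x y → P.hole.toSubgraph.Adj x y := by
    intro x y h
    rw [Pyramid.hole, Walk.toSubgraph_append]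
    rcases h with h | ⟨rfl, rfl⟩ | h
    · exact Or.inl h
    · exact Or.inr (Or.inl (by simp))
    · exact Or.inr (Or.inr (by rw [Walk.toSubgraph_reverse]; exact h))
  intro x y hx hy hadj
  rw [hole_support_iff] at hx hy
  have hcross : ∀ a b : V, a ∈ P.P1.support → b ∈ P.P2.support → G.Adj a b →
      P.hole.toSubgraph.Adj a b := by
    intro a b ha hb hab
    by_cases haa : a = P.apex
    · subst haa
      exact hts _ _ (Or.inr (Or.inr (P.induced2 _ _ P.P2.start_mem_support hb hab)))
    · by_cases hba : b = P.apex
      · subst hba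
        exact hts _ _ (Or.inl (P.induced1 _ _ ha P.P1.start_mem_support hab))
      · obtain ⟨rfl, rfl⟩ := P.edges12 a b ha hb haa hba hab
        exact hts _ _ (Or.inr (Or.inl ⟨rfl, rfl⟩))
  rcases hx with hx | hx
  · rcases hy with hy | hy
    · exact hts _ _ (Or.inl (P.induced1 _ _ hx hy hadj))
    · exact hcross _ _ hx hy hadj
  · rcases hy with hy | hy
    · exact (hcross _ _ hy hx hadj.symm).symm
    · exact hts _ _ (Or.inr (Or.inr (P.induced2 _ _ hx hy hadj)))

open scoped Classical in
lemma hole_nbrCount (P : Pyramid G) (v : V) (hb : ¬(G.Adj v P.b1 ∧ G.Adj v P.b2)) :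
    nbrCount G v P.hole = nbrCount G v P.P1 + nbrCount G v P.P2 := by
  classical
  rw [nbrCount, hole_edges, List.countP_append, List.countP_cons]
  have h0 : (if decide (∀ x ∈ s(P.b1, P.b2), G.Adj v x) = true then 1 else 0) = 0 := by
    simp only [decide_eq_true_eq, ite_eq_right_iff]
    intro h
    exact absurd ⟨h _ (by simp), h _ (by simp)⟩ hb
  have hrev : (P.P2.edges.reverse).countP (fun e => decide (∀ x ∈ e, G.Adj v x)) =
      P.P2.edges.countP (fun e => decide (∀ x ∈ e, G.Adj v x)) :=
    (P.P2.edges.reverse_perm).countP_eq _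
  rw [h0, hrev, nbrCount, nbrCount]
  omega

/-- pyramid with `b2`, `b3` (and `P2`, `P3`) exchanged. -/
def Pyramid.perm132 (P : Pyramid G) : Pyramid G where
  apex := P.apex
  b1 := P.b1
  b2 := P.b3
  b3 := P.b2
  P1 := P.P1
  P2 := P.P3
  P3 := P.P2
  distinct := by
    have := pyramid_distincts P
    simp only [List.nodup_cons, List.mem_cons, List.mem_singleton, List.nodup_nil,
      List.not_mem_nil, or_false, not_or, and_true]
    tauto
  isPath1 := P.isPath1
  isPath2 := P.isPath3
  isPath3 := P.isPath2
  induced1 := P.induced1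
  induced2 := P.induced3
  induced3 := P.induced2
  adj12 := P.adj13
  adj13 := P.adj12
  adj23 := P.adj23.symm
  twoLong := by
    rcases P.twoLong with h | h | h
    · exact Or.inr (Or.inl ⟨h.1, h.2⟩)
    · exact Or.inl ⟨h.1, h.2⟩
    · exact Or.inr (Or.inr ⟨h.2, h.1⟩)
  disj12 := P.disj13
  disj13 := P.disj12
  disj23 := by rw [Set.inter_comm]; exact P.disj23
  edges12 := P.edges13
  edges13 := P.edges12
  edges23 := fun x y hx hy hxa hya hadj => by
    obtain ⟨h1, h2⟩ := P.edges23 y x hy hx hya hxa hadj.symm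
    exact ⟨h2, h1⟩

/-- pyramid with paths in the order `P2`, `P3`, `P1`. -/
def Pyramid.perm231 (P : Pyramid G) : Pyramid G where
  apex := P.apex
  b1 := P.b2
  b2 := P.b3
  b3 := P.b1
  P1 := P.P2
  P2 := P.P3
  P3 := P.P1
  distinct := by
    have := pyramid_distincts P
    simp only [List.nodup_cons, List.mem_cons, List.mem_singleton, List.nodup_nil,
      List.not_mem_nil, or_false, not_or, and_true]
    tauto
  isPath1 := P.isPath2
  isPath2 := P.isPath3
  isPath3 := P.isPath1
  induced1 := P.induced2
  induced2 := P.induced3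
  induced3 := P.induced1
  adj12 := P.adj23
  adj13 := P.adj12.symm
  adj23 := P.adj13.symm
  twoLong := by
    rcases P.twoLong with h | h | h
    · exact Or.inr (Or.inl ⟨h.2, h.1⟩)
    · exact Or.inr (Or.inr ⟨h.2, h.1⟩)
    · exact Or.inl ⟨h.1, h.2⟩
  disj12 := P.disj23
  disj13 := by rw [Set.inter_comm]; exact P.disj12
  disj23 := by rw [Set.inter_comm]; exact P.disj13
  edges12 := P.edges23
  edges13 := fun x y hx hy hxa hya hadj => by
    obtain ⟨h1, h2⟩ := P.edges12 y x hy hx hya hxa hadj.symm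
    exact ⟨h2, h1⟩
  edges23 := fun x y hx hy hxa hya hadj => by
    obtain ⟨h1, h2⟩ := P.edges13 y x hy hx hya hxa hadj.symm
    exact ⟨h2, h1⟩

end pyramid

section main

variable {G : SimpleGraph V}

lemma pyramid_len3 (P : Pyramid G) : 1 ≤ P.P3.length := by
  rcases Nat.eq_zero_or_pos P.P3.length with h | h
  · exact absurd (Walk.eq_of_length_eq_zero h) (pyramid_distincts P).2.2.1
  · exact h

end main

/-- a vertex major for a great pyramid with at most one neighbour in the
base has no neighbour in `V(Pk) \ {a}` for some `k ∈ {1,2,3}`. -/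
theorem major_misses_one_path (G : SimpleGraph V)
    (hnoJewel : ∀ (w : V) (c : G.Walk w w), IsShortestOddHole G c → ¬ Jewelled G c)
    (H : GreatPyramid G) (v : V) (hmaj : BigCMajor G H.toPyramid.hole v)
    (hbase : (({H.b1, H.b2, H.b3} : Set V) ∩ {w | G.Adj v w}).ncard ≤ 1) :
    (∀ w ∈ H.P1.support, w ≠ H.apex → ¬ G.Adj v w) ∨
    (∀ w ∈ H.P2.support, w ≠ H.apex → ¬ G.Adj v w) ∨
    (∀ w ∈ H.P3.support, w ≠ H.apex → ¬ G.Adj v w) := by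
  classical
  by_contra hcon
  push_neg at hcon
  obtain ⟨⟨x1, hx1s, hx1a, hx1adj⟩, ⟨x2, hx2s, hx2a, hx2adj⟩, ⟨x3, hx3s, hx3a, hx3adj⟩⟩ := hcon
  have hd := pyramid_distincts H.toPyramid
  obtain ⟨hOH, hmin⟩ := H.holeShortest
  obtain ⟨⟨hCcyc, hC4, hCind⟩, hCodd⟩ := hOH
  have hlenC := hole_length H.toPyramid
  have hp1 := pyramid_len1 H.toPyramid
  have hp2 := pyramid_len2 H.toPyramid
  have hp3 := pyramid_len3 H.toPyramid
  have h31 := H.short31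
  have h32 := H.short32
  have hS4 := hmaj.2
  -- no two base vertices are both neighbours of v
  have h2base : ∀ bx bz : V, bx ≠ bz → bx ∈ ({H.b1, H.b2, H.b3} : Set V) →
      bz ∈ ({H.b1, H.b2, H.b3} : Set V) → ¬(G.Adj v bx ∧ G.Adj v bz) := by
    rintro bx bz hne hbx hbz ⟨h1, h2⟩
    have hsub : ({bx, bz} : Set V) ⊆ ({H.b1, H.b2, H.b3} : Set V) ∩ {w | G.Adj v w} := by
      rintro w (rfl | rfl)
      · exact ⟨hbx, h1⟩
      · exact ⟨hbz, h2⟩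
    have hcard : ({bx, bz} : Set V).ncard = 2 := Set.ncard_pair hne
    have hfin : (({H.b1, H.b2, H.b3} : Set V) ∩ {w | G.Adj v w}).Finite :=
      Set.Finite.inter_of_left (Set.toFinite _) _
    have hle := Set.ncard_le_ncard hsub hfin
    omega
  have hb12 : ¬(G.Adj v H.b1 ∧ G.Adj v H.b2) :=
    h2base _ _ hd.2.2.2.1 (by simp) (by simp)
  have hb13 : ¬(G.Adj v H.b1 ∧ G.Adj v H.b3) :=
    h2base _ _ hd.2.2.2.2.1 (by simp) (by simp)
  have hb23 : ¬(G.Adj v H.b2 ∧ G.Adj v H.b3) :=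
    h2base _ _ hd.2.2.2.2.2 (by simp) (by simp)
  -- v is not on the hole
  have hvC : v ∉ H.toPyramid.hole.support := by
    intro hvmem
    set C := H.toPyramid.hole with hC
    have hm3 : 3 ≤ C.length := hCcyc.three_le_length
    have htaillen : C.support.tail.length = C.length := by
      have h1 := C.length_support
      have h2 : C.support.length = C.support.tail.length + 1 := by
        conv_lhs => rw [C.support_eq_cons]
        simp
      omega
    obtain ⟨i0, hi01, hi0m, hi0v⟩ : ∃ i0, 1 ≤ i0 ∧ i0 ≤ C.length ∧ C.getVert i0 = v := by
      rw [C.support_eq_cons, List.mem_cons] at hvmem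
      rcases hvmem with rfl | htail
      · exact ⟨C.length, by omega, le_rfl, C.getVert_length⟩
      · obtain ⟨t, ht, hteq⟩ := List.mem_iff_getElem.mp htail
        refine ⟨t + 1, by omega, by omega, ?_⟩
        have hs := support_getElem? C (t + 1) (by omega)
        rw [C.support_eq_cons] at hs
        simp only [List.getElem?_cons_succ] at hs
        rw [List.getElem?_eq_getElem ht, hteq] at hs
        exact (Option.some_injective _ hs).symm
    have hsub : {w | w ∈ C.support ∧ G.Adj v w} ⊆
        {C.getVert (i0 + 1), C.getVert 1, C.getVert (i0 - 1)} := by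
      rintro w ⟨hws, hwa⟩
      have hts := hCind v w hvmem hws hwa
      obtain ⟨k, hkeq, hklt⟩ := (Walk.toSubgraph_adj_iff C).mp hts
      rcases Sym2.eq_iff.mp hkeq with ⟨h1, h2⟩ | ⟨h1, h2⟩
      · -- getVert k = v, getVert (k+1) = w
        rw [← hi0v] at h1
        rcases cycle_getVert_inj hCcyc (by omega) (by omega) h1 with rfl | ⟨hk0, hi0m'⟩
          | ⟨hi00, hkm⟩
        · exact Or.inl h2.symm
        · subst hk0
          exact Or.inr (Or.inl h2.symm)
        · omega
      · -- getVert k = w, getVert (k+1) = v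
        rw [← hi0v] at h2
        rcases cycle_getVert_inj hCcyc (by omega) (by omega) h2 with hk | ⟨hk0, hi0m'⟩
          | ⟨hi00, hkm⟩
        · refine Or.inr (Or.inr ?_)
          rw [← h1]
          congr 1
          omega
        · omega
        · omega
    have := ncard_le_three _ _ _ _ hsub
    omega
  -- v is not on P3 either
  have hapexC : H.apex ∈ H.toPyramid.hole.support := Walk.start_mem_support _
  have hvP3 : v ∉ H.P3.support := by
    intro hv3
    have hva : v ≠ H.apex := by
      rintro rfl
      exact hvC hapexC
    have hsub : {w | w ∈ H.toPyramid.hole.support ∧ G.Adj v w} ⊆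
        {H.apex, H.b1, H.b2} := by
      rintro w ⟨hws, hwa⟩
      rw [hole_support_iff] at hws
      rcases hws with hw1 | hw2
      · by_cases hwapex : w = H.apex
        · exact Or.inl hwapex
        · obtain ⟨rfl, _⟩ := H.toPyramid.edges13 w v hw1 hv3 hwapex hva hwa.symm
          exact Or.inr (Or.inl rfl)
      · by_cases hwapex : w = H.apex
        · exact Or.inl hwapex
        · obtain ⟨rfl, _⟩ := H.toPyramid.edges23 w v hw2 hv3 hwapex hva hwa.symm
          exact Or.inr (Or.inr rfl)
    have := ncard_le_three _ _ _ _ hsub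
    omega
  -- the two side holes, via permuted pyramids
  set Q2 := H.toPyramid.perm132 with hQ2
  set Q3 := H.toPyramid.perm231 with hQ3
  have hm1 : Q2.hole.length = H.P1.length + H.P3.length + 1 := hole_length Q2
  have hm2 : Q3.hole.length = H.P2.length + H.P3.length + 1 := hole_length Q3
  -- the side holes have even length
  have heven1 : Even Q2.hole.length := by
    by_contra hodd
    rw [Nat.not_even_iff_odd] at hodd
    have hOH1 : IsOddHole G Q2.hole :=
      ⟨⟨hole_isCycle Q2, by omega, hole_induced Q2⟩, hodd⟩
    have := hmin _ _ hOH1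
    omega
  have heven2 : Even Q3.hole.length := by
    by_contra hodd
    rw [Nat.not_even_iff_odd] at hodd
    have hOH2 : IsOddHole G Q3.hole :=
      ⟨⟨hole_isCycle Q3, by omega, hole_induced Q3⟩, hodd⟩
    have := hmin _ _ hOH2
    omega
  -- v is not on the side holes
  have hvQ2 : v ∉ Q2.hole.support := by
    intro h
    rw [hole_support_iff] at h
    rcases h with h | h
    · exact hvC ((hole_support_iff H.toPyramid v).mpr (Or.inl h))
    · exact hvP3 h
  have hvQ3 : v ∉ Q3.hole.support := by
    intro h
    rw [hole_support_iff] at h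
    rcases h with h | h
    · exact hvC ((hole_support_iff H.toPyramid v).mpr (Or.inr h))
    · exact hvP3 h
  -- gap parity for the main hole
  have hndC : ∀ x y : V, x ∈ H.toPyramid.hole.support → y ∈ H.toPyramid.hole.support →
      G.Adj v x → G.Adj v y → G.Adj x y →
      ∃ z ∈ H.toPyramid.hole.support, G.Adj v z ∧ z ≠ x ∧ z ≠ y := by
    intro x y hx hy hvx hvy hxy
    by_contra hno
    push_neg at hno
    have hsub : {w | w ∈ H.toPyramid.hole.support ∧ G.Adj v w} ⊆ ({x, y, y} : Set V) := by
      rintro w ⟨hws, hwa⟩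
      by_cases hwx : w = x
      · exact Or.inl hwx
      · exact Or.inr (Or.inl (hno w hws hwa hwx))
    have := ncard_le_three _ _ _ _ hsub
    omega
  have hparC := gap_parity G v H.toPyramid.hole hCcyc hCind hvC hmin hndC (Or.inr hS4)
  -- gap parity for the first side hole
  have hx1Q2 : x1 ∈ Q2.hole.support := (hole_support_iff Q2 x1).mpr (Or.inl hx1s)
  have hx3Q2 : x3 ∈ Q2.hole.support := (hole_support_iff Q2 x3).mpr (Or.inr hx3s)
  have hx13 : x1 ≠ x3 := by
    intro h
    exact hx1a (mem_inter_apex Q2 hx1s (h ▸ hx3s))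
  have hndQ2 : ∀ x y : V, x ∈ Q2.hole.support → y ∈ Q2.hole.support →
      G.Adj v x → G.Adj v y → G.Adj x y →
      ∃ z ∈ Q2.hole.support, G.Adj v z ∧ z ≠ x ∧ z ≠ y := by
    intro x y hx hy hvx hvy hxy
    by_cases h1 : x1 ≠ x ∧ x1 ≠ y
    · exact ⟨x1, hx1Q2, hx1adj, h1.1, h1.2⟩
    · by_cases h3 : x3 ≠ x ∧ x3 ≠ y
      · exact ⟨x3, hx3Q2, hx3adj, h3.1, h3.2⟩
      · exfalso
        push_neg at h1 h3
        -- {x, y} = {x1, x3} and they are adjacent, so x1 = b1, x3 = b3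
        have hadj13 : G.Adj x1 x3 := by
          by_cases hx1x : x1 = x
          · have hx3y : x3 = y := by
              rcases (em (x3 = x)) with h | h
              · exact absurd (hx1x.trans h.symm) hx13
              · exact h3 h
            rw [hx1x, hx3y]
            exact hxy
          · have hx1y : x1 = y := h1 hx1x
            have hx3x : x3 = x := by
              rcases (em (x3 = y)) with h | h
              · exact absurd (hx1y.trans h.symm) hx13
              · rcases (em (x3 = x)) with h' | h'
                · exact h'
                · exact absurd (h3 h') h
            rw [hx1y, hx3x]
            exact hxy.symm
        obtain ⟨he1, he3⟩ := H.toPyramid.edges13 x1 x3 hx1s hx3s hx1a hx3a hadj13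
        rw [he1] at hx1adj
        rw [he3] at hx3adj
        exact hb13 ⟨hx1adj, hx3adj⟩
  have hminQ2 : ∀ (w : V) (d : G.Walk w w), IsOddHole G d → Q2.hole.length ≤ d.length := by
    intro w d hdOH
    have := hmin w d hdOH
    omega
  have hparQ2 := gap_parity G v Q2.hole (hole_isCycle Q2) (hole_induced Q2) hvQ2 hminQ2
    hndQ2 (Or.inl heven1)
  -- gap parity for the second side hole
  have hx2Q3 : x2 ∈ Q3.hole.support := (hole_support_iff Q3 x2).mpr (Or.inl hx2s)
  have hx3Q3 : x3 ∈ Q3.hole.support := (hole_support_iff Q3 x3).mpr (Or.inr hx3s)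
  have hx23 : x2 ≠ x3 := by
    intro h
    exact hx2a (mem_inter_apex Q3 hx2s (h ▸ hx3s))
  have hndQ3 : ∀ x y : V, x ∈ Q3.hole.support → y ∈ Q3.hole.support →
      G.Adj v x → G.Adj v y → G.Adj x y →
      ∃ z ∈ Q3.hole.support, G.Adj v z ∧ z ≠ x ∧ z ≠ y := by
    intro x y hx hy hvx hvy hxy
    by_cases h1 : x2 ≠ x ∧ x2 ≠ y
    · exact ⟨x2, hx2Q3, hx2adj, h1.1, h1.2⟩
    · by_cases h3 : x3 ≠ x ∧ x3 ≠ y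
      · exact ⟨x3, hx3Q3, hx3adj, h3.1, h3.2⟩
      · exfalso
        push_neg at h1 h3
        have hadj23 : G.Adj x2 x3 := by
          by_cases hx2x : x2 = x
          · have hx3y : x3 = y := by
              rcases (em (x3 = x)) with h | h
              · exact absurd (hx2x.trans h.symm) hx23
              · exact h3 h
            rw [hx2x, hx3y]
            exact hxy
          · have hx2y : x2 = y := h1 hx2x
            have hx3x : x3 = x := by
              rcases (em (x3 = y)) with h | h
              · exact absurd (hx2y.trans h.symm) hx23
              · rcases (em (x3 = x)) with h' | h'
                · exact h'
                · exact absurd (h3 h') h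
            rw [hx2y, hx3x]
            exact hxy.symm
        obtain ⟨he2, he3⟩ := H.toPyramid.edges23 x2 x3 hx2s hx3s hx2a hx3a hadj23
        rw [he2] at hx2adj
        rw [he3] at hx3adj
        exact hb23 ⟨hx2adj, hx3adj⟩
  have hminQ3 : ∀ (w : V) (d : G.Walk w w), IsOddHole G d → Q3.hole.length ≤ d.length := by
    intro w d hdOH
    have := hmin w d hdOH
    omega
  have hparQ3 := gap_parity G v Q3.hole (hole_isCycle Q3) (hole_induced Q3) hvQ3 hminQ3
    hndQ3 (Or.inl heven2)
  -- decompose the counts and finish by parity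
  have hc0 : nbrCount G v H.toPyramid.hole = nbrCount G v H.P1 + nbrCount G v H.P2 :=
    hole_nbrCount H.toPyramid v hb12
  have hc1 : nbrCount G v Q2.hole = nbrCount G v H.P1 + nbrCount G v H.P3 :=
    hole_nbrCount Q2 v hb13
  have hc2 : nbrCount G v Q3.hole = nbrCount G v H.P2 + nbrCount G v H.P3 :=
    hole_nbrCount Q3 v hb23
  rw [hc0] at hparC
  rw [hc1] at hparQ2
  rw [hc2] at hparQ3
  have hCoddm : H.toPyramid.hole.length % 2 = 1 := Nat.odd_iff.mp hCodd
  rw [Nat.even_iff] at heven1 heven2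
  omega



end SOH
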